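/- With R a subalgebra of an affine integral domain S, U = {𝔫 ∈ Max S : R_{𝔫∩R} = S_𝔫} is contained in W = {𝔫 ∈ Max S : √((𝔫∩R)S) = 𝔫}. -/

import Mathlib

/-- The localization of a ring `T` at an ideal `M`, realized as a subset of `K` via
`f : T →+* K`. -/
def locSet {T K : Type*} [CommRing T] [CommRing K] (f : T →+* K) (M : Ideal T) : Set K :=
  {x | ∃ a b : T, b ∉ M ∧ x * f b = f a}

/-- For `R` a subalgebra of an affine integral domain `S`,
`U = {𝔫 ∈ Max S | R_{𝔫 ∩ R} = S_𝔫}` is contained in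
`W = {𝔫 ∈ Max S | √((𝔫 ∩ R)S) = 𝔫}`. -/
theorem stmt_7 {k S : Type*} [Field k] [IsAlgClosed k] [CommRing S] [IsDomain S]
    [Algebra k S] [Algebra.FiniteType k S] (R : Subalgebra k S)
    (U W : Set (Ideal S))
    (hU : U = {n | n.IsMaximal ∧
      locSet ((algebraMap S (FractionRing S)).comp R.toSubring.subtype)
          (n.comap R.toSubring.subtype)
        = locSet (algebraMap S (FractionRing S)) n})
    (hW : W = {n | n.IsMaximal ∧
      (Ideal.map R.toSubring.subtype (n.comap R.toSubring.subtype)).radical = n}) :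
    U ⊆ W := by
  subst hU hW
  intro n hn
  obtain ⟨hmax, hloc⟩ := hn
  refine ⟨hmax, ?_⟩
  haveI := hmax
  set ι : R →+* S := R.toSubring.subtype with hι
  set p : Ideal R := n.comap ι with hpdef
  set f : S →+* FractionRing S := algebraMap S (FractionRing S) with hfdef
  have hf : Function.Injective f := IsFractionRing.injective S (FractionRing S)
  -- `p` is maximal (Nullstellensatz).
  have hpmax : p.IsMaximal := by
    letI : Field (S ⧸ n) := Ideal.Quotient.field n
    haveI : Algebra.FiniteType k (S ⧸ n) :=
      Algebra.FiniteType.of_surjective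
        (Ideal.Quotient.mkₐ k n) Ideal.Quotient.mk_surjective
    haveI : Module.Finite k (S ⧸ n) := finite_of_finite_type_of_isJacobsonRing k (S ⧸ n)
    haveI : Algebra.IsIntegral k (S ⧸ n) := Algebra.IsIntegral.of_finite k _
    have hsurj : Function.Surjective (algebraMap k (S ⧸ n)) :=
      IsAlgClosed.algebraMap_bijective_of_isIntegral.2
    set φ : R →+* S ⧸ n := (Ideal.Quotient.mk n).comp ι with hφdef
    have hφ : Function.Surjective φ := by
      intro x
      obtain ⟨c, hc⟩ := hsurj x
      refine ⟨algebraMap k R c, ?_⟩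
      have h1 : ι (algebraMap k R c) = algebraMap k S c := rfl
      have h2 : (Ideal.Quotient.mk n) (algebraMap k S c) = algebraMap k (S ⧸ n) c := rfl
      simp [hφdef, h1, h2, hc]
    have hker : RingHom.ker φ = p := by
      ext r
      simp [hφdef, RingHom.mem_ker, Ideal.Quotient.eq_zero_iff_mem, hpdef, Ideal.mem_comap]
    have := RingHom.ker_isMaximal_of_surjective φ hφ
    rwa [hker] at this
  -- radical ≤ n
  have hle : Ideal.map ι p ≤ n := Ideal.map_le_iff_le_comap.mpr le_rfl
  have h1 : (Ideal.map ι p).radical ≤ n := by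
    have := Ideal.radical_mono hle
    rwa [hmax.isPrime.radical] at this
  -- n ≤ radical, via Jacobson property
  haveI : IsJacobsonRing S := isJacobsonRing_of_finiteType (A := k)
  have h2 : n ≤ (Ideal.map ι p).radical := by
    rw [Ideal.radical_eq_jacobson]
    refine le_sInf ?_
    rintro m ⟨hm1, hm2⟩
    -- m ∩ R = p
    have hpm : p ≤ m.comap ι := Ideal.map_le_iff_le_comap.mp hm1
    have hcm : m.comap ι = p := by
      refine (hpmax.eq_of_le (fun htop => ?_) hpm).symm
      have : (1 : S) ∈ m := by
        have : (1 : R) ∈ m.comap ι := by rw [htop]; trivial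
        simpa using this
      exact hm2.ne_top (Ideal.eq_top_of_isUnit_mem m this isUnit_one)
    -- show n ≤ m
    by_contra hnm
    have hne : n ≠ m := fun h => hnm (le_of_eq h)
    have hmn : ¬ m ≤ n := fun h => hne (hm2.eq_of_le hmax.ne_top h).symm
    obtain ⟨y, hym, hyn⟩ := Set.not_subset.mp hmn
    -- y is a unit in S_n, so its inverse lies in R_p
    have hy0 : y ≠ 0 := fun h => hyn (h ▸ n.zero_mem)
    have hfy : f y ≠ 0 := fun h => hy0 (hf (by simpa using h))
    have hxmem : (f y)⁻¹ ∈ locSet f n := ⟨1, y, hyn, by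
      rw [inv_mul_cancel₀ hfy, map_one]⟩
    rw [← hloc] at hxmem
    obtain ⟨c, d, hd, hcd⟩ := hxmem
    -- hcd : (f y)⁻¹ * (f.comp ι) d = (f.comp ι) c
    have h3 := hcd
    rw [inv_mul_eq_iff_eq_mul₀ hfy] at h3
    have key : ι d = y * ι c := by
      apply hf
      rw [map_mul]
      simpa [mul_comm] using h3
    have hdm : ι d ∈ m := by
      rw [key]
      exact m.mul_mem_right _ hym
    have : d ∈ p := by rw [← hcm]; exact hdm
    exact hd this
  exact le_antisymm h1 h2
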